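/- Assume the Verblunsky coefficients satisfy the decay hypothesis (1.5). Then for every ε ∈ (0,b) there is a constant C_ε > 0 such that for all n ≥ 1 and all z with |z| ≤ b − ε, |Φ_n(z) − S(z) · Σ_{ℓ=1}^L conj(C_ℓ) conj(b_ℓ)^n (z − conj(b_ℓ))^{-1}| ≤ C_ε · n · (max(bΔ, b², b−ε))^n. In particular, b^{-n}[Φ_n(z) − S(z) Σ_{ℓ=1}^L conj(C_ℓ) (conj(b_ℓ)/b)^n b^n (z − conj(b_ℓ))^{-1}] → 0 uniformly on {|z| ≤ b − ε}. -/

import Mathlib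

open Polynomial Filter Topology

/-- The monic orthogonal polynomials on the unit circle, defined by the Szegő
recursion `Φ₀ = 1`, `Φ_{n+1}(z) = z Φ_n(z) - conj(α_n) Φ_n^*(z)`, where the reversed
polynomial is `P^*(z) = Σ_{j=0}^n conj(c_{n-j}) z^j`. -/
noncomputable def PhiP (α : ℕ → ℂ) : ℕ → Polynomial ℂ
  | 0 => 1
  | n + 1 => X * PhiP α n -
      Polynomial.C ((starRingEnd ℂ) (α n)) *
        Polynomial.reflect n (Polynomial.map (starRingEnd ℂ) (PhiP α n))

/-- The reversed polynomial `Φ_n^*(z) = z^n conj(Φ_n(1/conj z))`. -/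
noncomputable def PhiStarP (α : ℕ → ℂ) (n : ℕ) : Polynomial ℂ :=
  Polynomial.reflect n (Polynomial.map (starRingEnd ℂ) (PhiP α n))

lemma aux_natDegree_reflect_le {q : Polynomial ℂ} {n : ℕ} (h : q.natDegree ≤ n) :
    (reflect n q).natDegree ≤ n := by
  rw [natDegree_le_iff_coeff_eq_zero]
  intro N hN
  rw [coeff_reflect, revAt_eq_self_of_lt hN]
  exact coeff_eq_zero_of_natDegree_lt (lt_of_le_of_lt h hN)

lemma aux_natDegree_PhiP_le (α : ℕ → ℂ) : ∀ n, (PhiP α n).natDegree ≤ n := by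
  intro n
  induction n with
  | zero => simp [PhiP]
  | succ n ih =>
    show (X * PhiP α n - _ * _).natDegree ≤ n + 1
    refine le_trans (natDegree_sub_le _ _) (max_le ?_ ?_)
    · exact le_trans (natDegree_mul_le) (by simp only [natDegree_X]; omega)
    · refine le_trans (natDegree_mul_le) ?_
      simp only [natDegree_C, zero_add]
      exact le_trans (aux_natDegree_reflect_le (le_trans (natDegree_map_le) ih)) (Nat.le_succ n)

lemma aux_reflect_reflect {p : Polynomial ℂ} {n : ℕ} (h : p.natDegree ≤ n) :
    reflect (n + 1) (reflect n p) = X * p := by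
  ext i
  rw [coeff_reflect, coeff_reflect]
  match i with
  | 0 =>
    rw [coeff_X_mul_zero, revAt_le (Nat.zero_le _), Nat.sub_zero,
      revAt_eq_self_of_lt (Nat.lt_succ_self n)]
    exact coeff_eq_zero_of_natDegree_lt (lt_of_le_of_lt h (Nat.lt_succ_self n))
  | j + 1 =>
    rw [coeff_X_mul]
    by_cases hj : j ≤ n
    · rw [revAt_le (by omega : j + 1 ≤ n + 1)]
      have : n + 1 - (j + 1) = n - j := by omega
      rw [this, revAt_le (Nat.sub_le n j)]
      congr 1; omega
    · rw [revAt_eq_self_of_lt (by omega : n + 1 < j + 1),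
        revAt_eq_self_of_lt (by omega : n < j + 1)]
      rw [coeff_eq_zero_of_natDegree_lt (by omega : p.natDegree < j + 1),
        coeff_eq_zero_of_natDegree_lt (by omega : p.natDegree < j)]

lemma aux_map_map (p : Polynomial ℂ) :
    (p.map (starRingEnd ℂ)).map (starRingEnd ℂ) = p := by
  rw [Polynomial.map_map]
  have : (starRingEnd ℂ).comp (starRingEnd ℂ) = RingHom.id ℂ :=
    RingHom.ext fun x => Complex.conj_conj x
  rw [this, Polynomial.map_id]

lemma aux_PhiStarP_succ (α : ℕ → ℂ) (n : ℕ) :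
    PhiStarP α (n + 1) = PhiStarP α n - Polynomial.C (α n) * (X * PhiP α n) := by
  have hd : (PhiP α n).natDegree ≤ n := aux_natDegree_PhiP_le α n
  have hdm : ((PhiP α n).map (starRingEnd ℂ)).natDegree ≤ n :=
    le_trans (natDegree_map_le) hd
  show reflect (n + 1) ((PhiP α (n+1)).map (starRingEnd ℂ)) = _
  have : PhiP α (n+1) = X * PhiP α n -
      Polynomial.C ((starRingEnd ℂ) (α n)) * PhiStarP α n := rfl
  rw [this, Polynomial.map_sub, Polynomial.map_mul, Polynomial.map_mul, Polynomial.map_C,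
    Polynomial.map_X, reflect_sub, reflect_C_mul]
  have h1 : reflect (n + 1) (X * (PhiP α n).map (starRingEnd ℂ)) =
      reflect n ((PhiP α n).map (starRingEnd ℂ)) := by
    have := reflect_mul (X : Polynomial ℂ) ((PhiP α n).map (starRingEnd ℂ))
      (natDegree_X_le) hdm
    rw [show (1 : ℕ) + n = n + 1 from Nat.add_comm 1 n] at this
    rw [this, reflect_one_X, one_mul]
  have h2 : ((PhiStarP α n).map (starRingEnd ℂ)) = reflect n (PhiP α n) := by
    show ((reflect n ((PhiP α n).map (starRingEnd ℂ))).map (starRingEnd ℂ)) = _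
    rw [← reflect_map, aux_map_map]
  rw [h1, h2, aux_reflect_reflect hd]
  simp [PhiStarP, Complex.conj_conj]

lemma aux_eval_PhiP_succ (α : ℕ → ℂ) (n : ℕ) (z : ℂ) :
    (PhiP α (n + 1)).eval z =
      z * (PhiP α n).eval z - (starRingEnd ℂ) (α n) * (PhiStarP α n).eval z := by
  show (X * PhiP α n - Polynomial.C ((starRingEnd ℂ) (α n)) * PhiStarP α n).eval z = _
  simp

lemma aux_eval_PhiStarP_succ (α : ℕ → ℂ) (n : ℕ) (z : ℂ) :
    (PhiStarP α (n + 1)).eval z =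
      (PhiStarP α n).eval z - α n * (z * (PhiP α n).eval z) := by
  rw [aux_PhiStarP_succ]; simp

lemma aux_eval_PhiP_zero (α : ℕ → ℂ) (z : ℂ) : (PhiP α 0).eval z = 1 := by simp [PhiP]

lemma aux_eval_PhiStarP_zero (α : ℕ → ℂ) (z : ℂ) : (PhiStarP α 0).eval z = 1 := by
  simp [PhiStarP, PhiP]

lemma aux_geom_le {b : ℝ} (hb0 : 0 ≤ b) (hb1 : b < 1) (m : ℕ) :
    ∑ i ∈ Finset.range m, b ^ i ≤ (1 - b)⁻¹ := by
  have h1 : (0:ℝ) < 1 - b := by linarith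
  rw [geom_sum_eq (by linarith : b ≠ 1), inv_eq_one_div,
    show (b ^ m - 1) / (b - 1) = (1 - b ^ m) / (1 - b) by rw [← neg_div_neg_eq]; ring_nf,
    div_le_div_iff₀ h1 h1]
  nlinarith [pow_nonneg hb0 m]

lemma aux_phi_bound (α : ℕ → ℂ) (n : ℕ) (z : ℂ) (hz : ‖z‖ ≤ 1) :
    ‖(PhiP α n).eval z‖ ≤ ∏ k ∈ Finset.range n, (1 + ‖α k‖) ∧
    ‖(PhiStarP α n).eval z‖ ≤ ∏ k ∈ Finset.range n, (1 + ‖α k‖) := by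
  induction n with
  | zero => simp [aux_eval_PhiP_zero, aux_eval_PhiStarP_zero]
  | succ n ih =>
    have hP0 : (0:ℝ) ≤ ∏ k ∈ Finset.range n, (1 + ‖α k‖) :=
      Finset.prod_nonneg fun k _ => by positivity
    rw [Finset.prod_range_succ]
    constructor
    · rw [aux_eval_PhiP_succ, sub_eq_add_neg]
      refine le_trans (norm_add_le _ _) ?_
      rw [norm_neg, norm_mul, norm_mul, Complex.norm_conj]
      have h1 : ‖z‖ * ‖(PhiP α n).eval z‖ ≤
          1 * ∏ k ∈ Finset.range n, (1 + ‖α k‖) :=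
        mul_le_mul hz ih.1 (norm_nonneg _) zero_le_one
      have h2 : ‖α n‖ * ‖(PhiStarP α n).eval z‖ ≤
          ‖α n‖ * ∏ k ∈ Finset.range n, (1 + ‖α k‖) :=
        mul_le_mul_of_nonneg_left ih.2 (norm_nonneg _)
      nlinarith [norm_nonneg (α n)]
    · rw [aux_eval_PhiStarP_succ, sub_eq_add_neg]
      refine le_trans (norm_add_le _ _) ?_
      rw [norm_neg, norm_mul, norm_mul]
      have h1 : ‖z‖ * ‖(PhiP α n).eval z‖ ≤
          1 * ∏ k ∈ Finset.range n, (1 + ‖α k‖) :=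
        mul_le_mul hz ih.1 (norm_nonneg _) zero_le_one
      have h2 := ih.2
      nlinarith [norm_nonneg (α n), norm_nonneg z,
        norm_nonneg ((PhiP α n).eval z)]

lemma aux_iter (α : ℕ → ℂ) (n : ℕ) (z : ℂ) :
    (PhiP α n).eval z = z ^ n - ∑ k ∈ Finset.range n,
      z ^ (n - 1 - k) * ((starRingEnd ℂ) (α k) * (PhiStarP α k).eval z) := by
  induction n with
  | zero => simp [aux_eval_PhiP_zero]
  | succ n ih =>
    rw [aux_eval_PhiP_succ, ih, Finset.sum_range_succ]
    have h1 : ∀ k ∈ Finset.range n, z ^ (n + 1 - 1 - k) *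
        ((starRingEnd ℂ) (α k) * (PhiStarP α k).eval z)
        = z * (z ^ (n - 1 - k) * ((starRingEnd ℂ) (α k) * (PhiStarP α k).eval z)) := by
      intro k hk
      rw [Finset.mem_range] at hk
      rw [show n + 1 - 1 - k = (n - 1 - k) + 1 by omega, pow_succ]
      ring
    rw [Finset.sum_congr rfl h1, show n + 1 - 1 - n = 0 by omega]
    rw [← Finset.mul_sum]
    ring

set_option maxHeartbeats 1000000 in
theorem stmt_7 (α : ℕ → ℂ) (hα : ∀ n, ‖α n‖ < 1)
    (L : ℕ) (hL : 1 ≤ L) (b Δ A : ℝ) (bs Cs : Fin L → ℂ)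
    (hb0 : 0 < b) (hb1 : b < 1) (hinj : Function.Injective bs)
    (habs : ∀ ℓ, ‖bs ℓ‖ = b) (hCs : ∀ ℓ, Cs ℓ ≠ 0)
    (hΔ0 : 0 < Δ) (hΔ1 : Δ < 1) (hA : 0 < A)
    (hdecay : ∀ n : ℕ,
      ‖α n - ∑ ℓ : Fin L, Cs ℓ * bs ℓ ^ n‖ ≤ A * (b * Δ) ^ n)
    (S : ℂ → ℂ)
    (hS : ∀ z : ℂ, ‖z‖ < 1 / b →
      Tendsto (fun n : ℕ => (PhiStarP α n).eval z) atTop (nhds (S z)))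
 :
    ∀ ε : ℝ, 0 < ε → ε < b →
      (∃ Cε : ℝ, 0 < Cε ∧ ∀ n : ℕ, 1 ≤ n → ∀ z : ℂ, ‖z‖ ≤ b - ε →
        ‖(PhiP α n).eval z -
            S z * ∑ ℓ : Fin L, (starRingEnd ℂ) (Cs ℓ) * ((starRingEnd ℂ) (bs ℓ)) ^ n *
              (z - (starRingEnd ℂ) (bs ℓ))⁻¹‖ ≤
          Cε * n * max (b * Δ) (max (b ^ 2) (b - ε)) ^ n) ∧
      TendstoUniformlyOn
        (fun (n : ℕ) (z : ℂ) =>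
          ((PhiP α n).eval z -
            S z * ∑ ℓ : Fin L, (starRingEnd ℂ) (Cs ℓ) * ((starRingEnd ℂ) (bs ℓ)) ^ n *
              (z - (starRingEnd ℂ) (bs ℓ))⁻¹) / (b : ℂ) ^ n)
        0 atTop {z : ℂ | ‖z‖ ≤ b - ε} := by
  -- global constants (independent of ε)
  have hb1' : (1:ℝ) < 1 / b := by rw [lt_div_iff₀ hb0]; linarith
  set SC : ℝ := ∑ ℓ : Fin L, ‖Cs ℓ‖ with hSCdef
  have hSC0 : 0 ≤ SC := Finset.sum_nonneg fun ℓ _ => norm_nonneg _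
  set Ca : ℝ := A + SC with hCadef
  have hCa0 : 0 < Ca := by linarith
  have h1b : (0:ℝ) < 1 - b := by linarith
  have hsumabs : ∀ n : ℕ, ‖∑ ℓ : Fin L, Cs ℓ * bs ℓ ^ n‖ ≤ SC * b ^ n := by
    intro n
    refine le_trans (norm_sum_le _ _) ?_
    rw [hSCdef, Finset.sum_mul]
    refine Finset.sum_le_sum fun ℓ _ => ?_
    rw [norm_mul, norm_pow, habs]
  have hαb : ∀ n, ‖α n‖ ≤ Ca * b ^ n := by
    intro n
    have h1 := hdecay n
    have h2 : (b * Δ) ^ n ≤ b ^ n := pow_le_pow_left₀ (by positivity) (by nlinarith) n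
    have h3 := hsumabs n
    calc ‖α n‖
        = ‖(α n - ∑ ℓ : Fin L, Cs ℓ * bs ℓ ^ n) + ∑ ℓ : Fin L, Cs ℓ * bs ℓ ^ n‖ := by
          congr 1; ring
      _ ≤ ‖α n - ∑ ℓ : Fin L, Cs ℓ * bs ℓ ^ n‖
          + ‖∑ ℓ : Fin L, Cs ℓ * bs ℓ ^ n‖ := norm_add_le _ _
      _ ≤ A * (b*Δ)^n + SC * b^n := add_le_add h1 h3
      _ ≤ Ca * b^n := by rw [hCadef]; nlinarith
  set Mb : ℝ := Real.exp (Ca * (1 - b)⁻¹) with hMbdef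
  have hMb1 : 1 ≤ Mb := Real.one_le_exp (by positivity)
  have hMb0 : 0 < Mb := by linarith
  have hM : ∀ (n : ℕ) (z : ℂ), ‖z‖ ≤ 1 →
      ‖(PhiP α n).eval z‖ ≤ Mb ∧ ‖(PhiStarP α n).eval z‖ ≤ Mb := by
    intro n z hz
    have hP := aux_phi_bound α n z hz
    have hPM : ∏ k ∈ Finset.range n, (1 + ‖α k‖) ≤ Mb := by
      calc ∏ k ∈ Finset.range n, (1 + ‖α k‖)
          ≤ ∏ k ∈ Finset.range n, Real.exp (‖α k‖) :=
            Finset.prod_le_prod (fun k _ => by positivity)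
              (fun k _ => by rw [add_comm]; exact Real.add_one_le_exp _)
        _ = Real.exp (∑ k ∈ Finset.range n, ‖α k‖) := (Real.exp_sum _ _).symm
        _ ≤ Mb := by
            rw [hMbdef]
            apply Real.exp_le_exp.mpr
            calc ∑ k ∈ Finset.range n, ‖α k‖
                ≤ ∑ k ∈ Finset.range n, Ca * b ^ k := Finset.sum_le_sum fun k _ => hαb k
              _ = Ca * ∑ k ∈ Finset.range n, b ^ k := by rw [Finset.mul_sum]
              _ ≤ Ca * (1 - b)⁻¹ :=
                  mul_le_mul_of_nonneg_left (aux_geom_le hb0.le hb1 n) hCa0.le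
    exact ⟨le_trans hP.1 hPM, le_trans hP.2 hPM⟩
  set K : ℝ := Ca * Mb * (1 - b)⁻¹ with hKdef
  have hK0 : 0 < K := by positivity
  have hψS : ∀ (n : ℕ) (z : ℂ), ‖z‖ ≤ 1 →
      ‖S z - (PhiStarP α n).eval z‖ ≤ K * b ^ n := by
    intro n z hz
    have hz' : ‖z‖ < 1 / b := lt_of_le_of_lt hz hb1'
    have hstep : ∀ m, n ≤ m →
        ‖(PhiStarP α m).eval z - (PhiStarP α n).eval z‖ ≤ K * b ^ n := by
      intro m hnm
      have htel : (PhiStarP α m).eval z - (PhiStarP α n).eval z =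
          ∑ k ∈ Finset.Ico n m, ((PhiStarP α (k+1)).eval z - (PhiStarP α k).eval z) := by
        rw [Finset.sum_Ico_eq_sub _ hnm,
          Finset.sum_range_sub (fun k => (PhiStarP α k).eval z),
          Finset.sum_range_sub (fun k => (PhiStarP α k).eval z)]
        ring
      rw [htel]
      refine le_trans (norm_sum_le _ _) ?_
      have hterm : ∀ k ∈ Finset.Ico n m,
          ‖(PhiStarP α (k+1)).eval z - (PhiStarP α k).eval z‖
            ≤ Ca * Mb * b ^ k := by
        intro k _
        rw [aux_eval_PhiStarP_succ,
          show (PhiStarP α k).eval z - α k * (z * (PhiP α k).eval z) - (PhiStarP α k).eval z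
            = -(α k * (z * (PhiP α k).eval z)) by ring,
          norm_neg, norm_mul, norm_mul]
        calc ‖α k‖ * (‖z‖ * ‖(PhiP α k).eval z‖)
            ≤ (Ca * b ^ k) * (1 * Mb) := by
              apply mul_le_mul (hαb k) _ (by positivity) (by positivity)
              exact mul_le_mul hz (hM k z hz).1 (norm_nonneg _) zero_le_one
          _ = Ca * Mb * b ^ k := by ring
      refine le_trans (Finset.sum_le_sum hterm) ?_
      calc ∑ k ∈ Finset.Ico n m, Ca * Mb * b ^ k
          = ∑ i ∈ Finset.range (m - n), Ca * Mb * b ^ (n + i) := by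
            rw [Finset.sum_Ico_eq_sum_range]
        _ = Ca * Mb * b ^ n * ∑ i ∈ Finset.range (m - n), b ^ i := by
            rw [Finset.mul_sum]
            exact Finset.sum_congr rfl fun i _ => by rw [pow_add]; ring
        _ ≤ Ca * Mb * b ^ n * (1 - b)⁻¹ :=
            mul_le_mul_of_nonneg_left (aux_geom_le hb0.le hb1 _) (by positivity)
        _ = K * b ^ n := by rw [hKdef]; ring
    have hlim : Tendsto (fun m => ‖(PhiStarP α m).eval z - (PhiStarP α n).eval z‖)
        atTop (nhds (‖S z - (PhiStarP α n).eval z‖)) :=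
      (continuous_norm.tendsto _).comp ((hS z hz').sub tendsto_const_nhds)
    exact le_of_tendsto hlim (Filter.eventually_atTop.mpr ⟨n, hstep⟩)
  have hSM : ∀ z : ℂ, ‖z‖ ≤ 1 → ‖S z‖ ≤ Mb := by
    intro z hz
    have hlim : Tendsto (fun m => ‖(PhiStarP α m).eval z‖) atTop
        (nhds (‖S z‖)) :=
      (continuous_norm.tendsto _).comp (hS z (lt_of_le_of_lt hz hb1'))
    exact le_of_tendsto hlim (Filter.Eventually.of_forall fun m => (hM m z hz).2)
  -- now fix ε
  intro ε hε0 hεb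
  have hr0 : (0:ℝ) < b - ε := by linarith
  have hrb : b - ε < b := by linarith
  have hr1 : b - ε < 1 := by linarith
  set q : ℝ := max (b * Δ) (max (b ^ 2) (b - ε)) with hqdef
  have hrq : b - ε ≤ q := le_max_of_le_right (le_max_right _ _)
  have hb2q : b ^ 2 ≤ q := le_max_of_le_right (le_max_left _ _)
  have hbΔq : b * Δ ≤ q := le_max_left _ _
  have hq0 : 0 < q := lt_of_lt_of_le hr0 hrq
  have hqb : q < b := by
    apply max_lt (by nlinarith) (max_lt (by nlinarith) (by linarith))
  have hmain : ∀ n : ℕ, 1 ≤ n → ∀ z : ℂ, ‖z‖ ≤ b - ε →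
      ‖(PhiP α n).eval z -
          S z * ∑ ℓ : Fin L, (starRingEnd ℂ) (Cs ℓ) * ((starRingEnd ℂ) (bs ℓ)) ^ n *
            (z - (starRingEnd ℂ) (bs ℓ))⁻¹‖ ≤
        ((1 + Mb * SC * ε⁻¹) + (SC * K + A * Mb) * (b - ε)⁻¹) * n * q ^ n := by
    intro n hn z hzr
    have hz1 : ‖z‖ ≤ 1 := le_trans hzr hr1.le
    have hn1 : (1:ℝ) ≤ (n:ℝ) := by exact_mod_cast hn
    have habsw : ∀ ℓ, ‖(starRingEnd ℂ) (bs ℓ)‖ = b := fun ℓ => by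
      rw [Complex.norm_conj, habs]
    have hwz : ∀ ℓ, ε ≤ ‖(starRingEnd ℂ) (bs ℓ) - z‖ := by
      intro ℓ
      have h := norm_sub_norm_le ((starRingEnd ℂ) (bs ℓ)) z
      rw [habsw] at h
      linarith
    have hwz0 : ∀ ℓ, (starRingEnd ℂ) (bs ℓ) - z ≠ 0 := by
      intro ℓ h
      have := hwz ℓ
      rw [h, norm_zero] at this
      linarith
    have hgeo : ∀ ℓ : Fin L, ∑ k ∈ Finset.range n,
        ((starRingEnd ℂ) (bs ℓ)) ^ k * z ^ (n - 1 - k)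
        = (((starRingEnd ℂ) (bs ℓ)) ^ n - z ^ n) * ((starRingEnd ℂ) (bs ℓ) - z)⁻¹ := by
      intro ℓ
      rw [← geom_sum₂_mul ((starRingEnd ℂ) (bs ℓ)) z n, mul_inv_cancel_right₀ (hwz0 ℓ)]
    -- key algebraic identity
    have hsplit : ∑ k ∈ Finset.range n,
        z ^ (n - 1 - k) * ((starRingEnd ℂ) (α k) * (PhiStarP α k).eval z)
        = (∑ ℓ : Fin L, S z * (starRingEnd ℂ) (Cs ℓ) *
            ((((starRingEnd ℂ) (bs ℓ)) ^ n - z ^ n) * ((starRingEnd ℂ) (bs ℓ) - z)⁻¹))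
          + ((∑ k ∈ Finset.range n, z ^ (n - 1 - k) *
              (∑ ℓ : Fin L, (starRingEnd ℂ) (Cs ℓ) * ((starRingEnd ℂ) (bs ℓ)) ^ k) *
              ((PhiStarP α k).eval z - S z))
          + (∑ k ∈ Finset.range n, z ^ (n - 1 - k) *
              ((starRingEnd ℂ) (α k) -
                ∑ ℓ : Fin L, (starRingEnd ℂ) (Cs ℓ) * ((starRingEnd ℂ) (bs ℓ)) ^ k) *
              (PhiStarP α k).eval z)) := by
      have e1 : ∀ k ∈ Finset.range n,
          z ^ (n - 1 - k) * ((starRingEnd ℂ) (α k) * (PhiStarP α k).eval z)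
          = (∑ ℓ : Fin L, (S z * (starRingEnd ℂ) (Cs ℓ)) *
              (((starRingEnd ℂ) (bs ℓ)) ^ k * z ^ (n - 1 - k)))
            + (z ^ (n - 1 - k) *
                (∑ ℓ : Fin L, (starRingEnd ℂ) (Cs ℓ) * ((starRingEnd ℂ) (bs ℓ)) ^ k) *
                ((PhiStarP α k).eval z - S z)
            + z ^ (n - 1 - k) *
                ((starRingEnd ℂ) (α k) -
                  ∑ ℓ : Fin L, (starRingEnd ℂ) (Cs ℓ) * ((starRingEnd ℂ) (bs ℓ)) ^ k) *
                (PhiStarP α k).eval z) := by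
        intro k _
        have h2 : ∑ ℓ : Fin L, (S z * (starRingEnd ℂ) (Cs ℓ)) *
            (((starRingEnd ℂ) (bs ℓ)) ^ k * z ^ (n - 1 - k))
            = (S z * z ^ (n - 1 - k)) *
              ∑ ℓ : Fin L, (starRingEnd ℂ) (Cs ℓ) * ((starRingEnd ℂ) (bs ℓ)) ^ k := by
          rw [Finset.mul_sum]
          exact Finset.sum_congr rfl fun ℓ _ => by ring
        rw [h2]
        ring
      rw [Finset.sum_congr rfl e1, Finset.sum_add_distrib, Finset.sum_add_distrib,
        Finset.sum_comm]
      congr 1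
      refine Finset.sum_congr rfl fun ℓ _ => ?_
      rw [← Finset.mul_sum, hgeo ℓ]
    have hT : S z * (∑ ℓ : Fin L, (starRingEnd ℂ) (Cs ℓ) * ((starRingEnd ℂ) (bs ℓ)) ^ n *
          (z - (starRingEnd ℂ) (bs ℓ))⁻¹)
        = -(∑ ℓ : Fin L, S z * (starRingEnd ℂ) (Cs ℓ) *
            ((((starRingEnd ℂ) (bs ℓ)) ^ n - z ^ n) * ((starRingEnd ℂ) (bs ℓ) - z)⁻¹))
          - (S z * z ^ n) *
            (∑ ℓ : Fin L, (starRingEnd ℂ) (Cs ℓ) * ((starRingEnd ℂ) (bs ℓ) - z)⁻¹) := by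
      rw [Finset.mul_sum]
      have e3 : ∀ ℓ ∈ (Finset.univ : Finset (Fin L)),
          S z * ((starRingEnd ℂ) (Cs ℓ) * ((starRingEnd ℂ) (bs ℓ)) ^ n *
            (z - (starRingEnd ℂ) (bs ℓ))⁻¹)
          = -(S z * (starRingEnd ℂ) (Cs ℓ) *
              ((((starRingEnd ℂ) (bs ℓ)) ^ n - z ^ n) * ((starRingEnd ℂ) (bs ℓ) - z)⁻¹))
            - (S z * z ^ n) *
              ((starRingEnd ℂ) (Cs ℓ) * ((starRingEnd ℂ) (bs ℓ) - z)⁻¹) := by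
        intro ℓ _
        rw [show (z - (starRingEnd ℂ) (bs ℓ))⁻¹
            = -(((starRingEnd ℂ) (bs ℓ) - z)⁻¹) by rw [← inv_neg, neg_sub]]
        ring
      rw [Finset.sum_congr rfl e3, Finset.sum_sub_distrib, Finset.sum_neg_distrib,
        ← Finset.mul_sum]
    have hkey : (PhiP α n).eval z -
        S z * ∑ ℓ : Fin L, (starRingEnd ℂ) (Cs ℓ) * ((starRingEnd ℂ) (bs ℓ)) ^ n *
          (z - (starRingEnd ℂ) (bs ℓ))⁻¹
        = z ^ n + (S z * z ^ n) *
            (∑ ℓ : Fin L, (starRingEnd ℂ) (Cs ℓ) * ((starRingEnd ℂ) (bs ℓ) - z)⁻¹)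
          - (∑ k ∈ Finset.range n, z ^ (n - 1 - k) *
              (∑ ℓ : Fin L, (starRingEnd ℂ) (Cs ℓ) * ((starRingEnd ℂ) (bs ℓ)) ^ k) *
              ((PhiStarP α k).eval z - S z))
          - (∑ k ∈ Finset.range n, z ^ (n - 1 - k) *
              ((starRingEnd ℂ) (α k) -
                ∑ ℓ : Fin L, (starRingEnd ℂ) (Cs ℓ) * ((starRingEnd ℂ) (bs ℓ)) ^ k) *
              (PhiStarP α k).eval z) := by
      rw [aux_iter α n z, hsplit, hT]
      ring
    rw [hkey]
    -- bounds
    have hzq : ‖z‖ ≤ q := le_trans hzr hrq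
    have h_zn : ‖z ^ n‖ ≤ q ^ n := by
      rw [norm_pow]; exact pow_le_pow_left₀ (norm_nonneg z) hzq n
    have h_sumi : ‖∑ ℓ : Fin L, (starRingEnd ℂ) (Cs ℓ) *
        ((starRingEnd ℂ) (bs ℓ) - z)⁻¹‖ ≤ SC * ε⁻¹ := by
      refine le_trans (norm_sum_le _ _) ?_
      rw [hSCdef, Finset.sum_mul]
      refine Finset.sum_le_sum fun ℓ _ => ?_
      rw [norm_mul, Complex.norm_conj, norm_inv]
      exact mul_le_mul_of_nonneg_left (inv_anti₀ hε0 (hwz ℓ)) (norm_nonneg _)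
    have h_cw : ∀ k : ℕ, ‖∑ ℓ : Fin L, (starRingEnd ℂ) (Cs ℓ) *
        ((starRingEnd ℂ) (bs ℓ)) ^ k‖ ≤ SC * b ^ k := by
      intro k
      refine le_trans (norm_sum_le _ _) ?_
      rw [hSCdef, Finset.sum_mul]
      refine Finset.sum_le_sum fun ℓ _ => ?_
      rw [norm_mul, Complex.norm_conj, norm_pow, habsw]
    have hpow_q : ∀ k, k ∈ Finset.range n → q ^ (n - 1 - k) * q ^ k = q ^ (n - 1) := by
      intro k hk
      rw [Finset.mem_range] at hk
      rw [← pow_add]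
      congr 1
      omega
    have h_R1 : ‖∑ k ∈ Finset.range n, z ^ (n - 1 - k) *
        (∑ ℓ : Fin L, (starRingEnd ℂ) (Cs ℓ) * ((starRingEnd ℂ) (bs ℓ)) ^ k) *
        ((PhiStarP α k).eval z - S z)‖ ≤ n * ((SC * K) * q ^ (n - 1)) := by
      refine le_trans (norm_sum_le _ _) ?_
      have hterm : ∀ k ∈ Finset.range n, ‖z ^ (n - 1 - k) *
          (∑ ℓ : Fin L, (starRingEnd ℂ) (Cs ℓ) * ((starRingEnd ℂ) (bs ℓ)) ^ k) *
          ((PhiStarP α k).eval z - S z)‖ ≤ (SC * K) * q ^ (n - 1) := by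
        intro k hk
        rw [norm_mul, norm_mul, norm_pow]
        have h1 : ‖z‖ ^ (n - 1 - k) ≤ q ^ (n - 1 - k) :=
          pow_le_pow_left₀ (norm_nonneg z) hzq _
        have h3 : ‖(PhiStarP α k).eval z - S z‖ ≤ K * b ^ k := by
          rw [norm_sub_rev]
          exact hψS k z hz1
        have hbb : b ^ k * b ^ k ≤ q ^ k := by
          calc b ^ k * b ^ k = (b ^ 2) ^ k := by
                rw [← pow_add, show k + k = 2 * k by omega, pow_mul]
            _ ≤ q ^ k := pow_le_pow_left₀ (by positivity) hb2q k
        calc ‖z‖ ^ (n - 1 - k) *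
              ‖∑ ℓ : Fin L, (starRingEnd ℂ) (Cs ℓ) *
                ((starRingEnd ℂ) (bs ℓ)) ^ k‖ *
              ‖(PhiStarP α k).eval z - S z‖
            ≤ q ^ (n - 1 - k) * (SC * b ^ k) * (K * b ^ k) := by
              apply mul_le_mul _ h3 (norm_nonneg _) (by positivity)
              exact mul_le_mul h1 (h_cw k) (norm_nonneg _) (by positivity)
          _ = (SC * K) * (q ^ (n - 1 - k) * (b ^ k * b ^ k)) := by ring
          _ ≤ (SC * K) * (q ^ (n - 1 - k) * q ^ k) := by
              apply mul_le_mul_of_nonneg_left _ (by positivity)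
              exact mul_le_mul_of_nonneg_left hbb (by positivity)
          _ = (SC * K) * q ^ (n - 1) := by rw [hpow_q k hk]
      refine le_trans (Finset.sum_le_sum hterm) ?_
      rw [Finset.sum_const, Finset.card_range, nsmul_eq_mul]
    have h_R2 : ‖∑ k ∈ Finset.range n, z ^ (n - 1 - k) *
        ((starRingEnd ℂ) (α k) -
          ∑ ℓ : Fin L, (starRingEnd ℂ) (Cs ℓ) * ((starRingEnd ℂ) (bs ℓ)) ^ k) *
        (PhiStarP α k).eval z‖ ≤ n * ((A * Mb) * q ^ (n - 1)) := by
      refine le_trans (norm_sum_le _ _) ?_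
      have hterm : ∀ k ∈ Finset.range n, ‖z ^ (n - 1 - k) *
          ((starRingEnd ℂ) (α k) -
            ∑ ℓ : Fin L, (starRingEnd ℂ) (Cs ℓ) * ((starRingEnd ℂ) (bs ℓ)) ^ k) *
          (PhiStarP α k).eval z‖ ≤ (A * Mb) * q ^ (n - 1) := by
        intro k hk
        rw [norm_mul, norm_mul, norm_pow]
        have h1 : ‖z‖ ^ (n - 1 - k) ≤ q ^ (n - 1 - k) :=
          pow_le_pow_left₀ (norm_nonneg z) hzq _
        have h_e : ‖(starRingEnd ℂ) (α k) -
            ∑ ℓ : Fin L, (starRingEnd ℂ) (Cs ℓ) * ((starRingEnd ℂ) (bs ℓ)) ^ k‖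
            ≤ A * (b * Δ) ^ k := by
          have heq : (starRingEnd ℂ) (α k) -
              ∑ ℓ : Fin L, (starRingEnd ℂ) (Cs ℓ) * ((starRingEnd ℂ) (bs ℓ)) ^ k
              = (starRingEnd ℂ) (α k - ∑ ℓ : Fin L, Cs ℓ * bs ℓ ^ k) := by
            rw [map_sub, map_sum]
            congr 1
            exact Finset.sum_congr rfl fun ℓ _ => by rw [map_mul, map_pow]
          rw [heq, Complex.norm_conj]
          exact hdecay k
        have hΔq : (b * Δ) ^ k ≤ q ^ k := pow_le_pow_left₀ (by positivity) hbΔq k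
        calc ‖z‖ ^ (n - 1 - k) *
              ‖(starRingEnd ℂ) (α k) -
                ∑ ℓ : Fin L, (starRingEnd ℂ) (Cs ℓ) * ((starRingEnd ℂ) (bs ℓ)) ^ k‖ *
              ‖(PhiStarP α k).eval z‖
            ≤ q ^ (n - 1 - k) * (A * (b * Δ) ^ k) * Mb := by
              apply mul_le_mul _ (hM k z hz1).2 (norm_nonneg _) (by positivity)
              exact mul_le_mul h1 h_e (norm_nonneg _) (by positivity)
          _ = (A * Mb) * (q ^ (n - 1 - k) * (b * Δ) ^ k) := by ring
          _ ≤ (A * Mb) * (q ^ (n - 1 - k) * q ^ k) := by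
              apply mul_le_mul_of_nonneg_left _ (by positivity)
              exact mul_le_mul_of_nonneg_left hΔq (by positivity)
          _ = (A * Mb) * q ^ (n - 1) := by rw [hpow_q k hk]
      refine le_trans (Finset.sum_le_sum hterm) ?_
      rw [Finset.sum_const, Finset.card_range, nsmul_eq_mul]
    have h_Sterm : ‖(S z * z ^ n) *
        (∑ ℓ : Fin L, (starRingEnd ℂ) (Cs ℓ) * ((starRingEnd ℂ) (bs ℓ) - z)⁻¹)‖
        ≤ (Mb * q ^ n) * (SC * ε⁻¹) := by
      rw [norm_mul, norm_mul]
      apply mul_le_mul _ h_sumi (norm_nonneg _) (by positivity)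
      exact mul_le_mul (hSM z hz1) h_zn (norm_nonneg _) hMb0.le
    have hq1 : q ^ (n - 1) ≤ q ^ n * (b - ε)⁻¹ := by
      have h1 : q ^ (n - 1) * (b - ε) ≤ q ^ n := by
        calc q ^ (n - 1) * (b - ε) ≤ q ^ (n - 1) * q :=
              mul_le_mul_of_nonneg_left hrq (by positivity)
          _ = q ^ n := by rw [← pow_succ]; congr 1; omega
      calc q ^ (n - 1) = q ^ (n - 1) * (b - ε) * (b - ε)⁻¹ := by field_simp
        _ ≤ q ^ n * (b - ε)⁻¹ := mul_le_mul_of_nonneg_right h1 (by positivity)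
    -- triangle inequality
    have htri : ‖z ^ n + (S z * z ^ n) *
          (∑ ℓ : Fin L, (starRingEnd ℂ) (Cs ℓ) * ((starRingEnd ℂ) (bs ℓ) - z)⁻¹)
        - (∑ k ∈ Finset.range n, z ^ (n - 1 - k) *
            (∑ ℓ : Fin L, (starRingEnd ℂ) (Cs ℓ) * ((starRingEnd ℂ) (bs ℓ)) ^ k) *
            ((PhiStarP α k).eval z - S z))
        - (∑ k ∈ Finset.range n, z ^ (n - 1 - k) *
            ((starRingEnd ℂ) (α k) -
              ∑ ℓ : Fin L, (starRingEnd ℂ) (Cs ℓ) * ((starRingEnd ℂ) (bs ℓ)) ^ k) *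
            (PhiStarP α k).eval z)‖
        ≤ ‖z ^ n‖ + ‖(S z * z ^ n) *
            (∑ ℓ : Fin L, (starRingEnd ℂ) (Cs ℓ) * ((starRingEnd ℂ) (bs ℓ) - z)⁻¹)‖
          + ‖∑ k ∈ Finset.range n, z ^ (n - 1 - k) *
              (∑ ℓ : Fin L, (starRingEnd ℂ) (Cs ℓ) * ((starRingEnd ℂ) (bs ℓ)) ^ k) *
              ((PhiStarP α k).eval z - S z)‖
          + ‖∑ k ∈ Finset.range n, z ^ (n - 1 - k) *
              ((starRingEnd ℂ) (α k) -
                ∑ ℓ : Fin L, (starRingEnd ℂ) (Cs ℓ) * ((starRingEnd ℂ) (bs ℓ)) ^ k) *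
              (PhiStarP α k).eval z‖ := by
      refine le_trans (norm_sub_le _ _) (add_le_add_left ?_ _)
      refine le_trans (norm_sub_le _ _) (add_le_add_left ?_ _)
      exact norm_add_le _ _
    have hqn0 : (0:ℝ) ≤ q ^ n := by positivity
    have e1 : q ^ n ≤ (n:ℝ) * q ^ n := le_mul_of_one_le_left hqn0 hn1
    have e2 : (Mb * q ^ n) * (SC * ε⁻¹) ≤ (Mb * SC * ε⁻¹) * ((n:ℝ) * q ^ n) := by
      calc (Mb * q ^ n) * (SC * ε⁻¹) = (Mb * SC * ε⁻¹) * q ^ n := by ring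
        _ ≤ (Mb * SC * ε⁻¹) * ((n:ℝ) * q ^ n) :=
            mul_le_mul_of_nonneg_left e1 (by positivity)
    have e3 : (n:ℝ) * ((SC * K) * q ^ (n - 1)) ≤ (SC * K * (b - ε)⁻¹) * ((n:ℝ) * q ^ n) := by
      calc (n:ℝ) * ((SC * K) * q ^ (n - 1))
          ≤ (n:ℝ) * ((SC * K) * (q ^ n * (b - ε)⁻¹)) := by
            apply mul_le_mul_of_nonneg_left _ (Nat.cast_nonneg n)
            exact mul_le_mul_of_nonneg_left hq1 (by positivity)
        _ = (SC * K * (b - ε)⁻¹) * ((n:ℝ) * q ^ n) := by ring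
    have e4 : (n:ℝ) * ((A * Mb) * q ^ (n - 1)) ≤ (A * Mb * (b - ε)⁻¹) * ((n:ℝ) * q ^ n) := by
      calc (n:ℝ) * ((A * Mb) * q ^ (n - 1))
          ≤ (n:ℝ) * ((A * Mb) * (q ^ n * (b - ε)⁻¹)) := by
            apply mul_le_mul_of_nonneg_left _ (Nat.cast_nonneg n)
            exact mul_le_mul_of_nonneg_left hq1 (by positivity)
        _ = (A * Mb * (b - ε)⁻¹) * ((n:ℝ) * q ^ n) := by ring
    have hfinal : ((1 + Mb * SC * ε⁻¹) + (SC * K + A * Mb) * (b - ε)⁻¹) * (n:ℝ) * q ^ n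
        = (n:ℝ) * q ^ n + (Mb * SC * ε⁻¹) * ((n:ℝ) * q ^ n)
          + (SC * K * (b - ε)⁻¹) * ((n:ℝ) * q ^ n)
          + (A * Mb * (b - ε)⁻¹) * ((n:ℝ) * q ^ n) := by ring
    refine le_trans htri ?_
    refine le_trans (add_le_add (add_le_add (add_le_add h_zn h_Sterm) h_R1) h_R2) ?_
    linarith [e1, e2, e3, e4, hfinal]
  refine ⟨⟨(1 + Mb * SC * ε⁻¹) + (SC * K + A * Mb) * (b - ε)⁻¹, by positivity, hmain⟩, ?_⟩
  -- uniform convergence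
  rw [Metric.tendstoUniformlyOn_iff]
  intro δ hδ
  have hqb1 : q / b < 1 := (div_lt_one hb0).mpr hqb
  set Cε : ℝ := (1 + Mb * SC * ε⁻¹) + (SC * K + A * Mb) * (b - ε)⁻¹ with hCεdef
  have h0 : Tendsto (fun n : ℕ => Cε * ((n:ℝ) * (q / b) ^ n)) atTop (nhds 0) := by
    have := (tendsto_self_mul_const_pow_of_lt_one (by positivity) hqb1).const_mul Cε
    simpa using this
  filter_upwards [h0.eventually (gt_mem_nhds hδ), eventually_ge_atTop 1] with n h1 h2
  intro z hz
  have hb' := hmain n h2 z hz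
  rw [Pi.zero_apply, dist_zero_left, norm_div, norm_pow, Complex.norm_real,
    Real.norm_eq_abs, abs_of_pos hb0]
  have hstep : ‖(PhiP α n).eval z -
      S z * ∑ ℓ : Fin L, (starRingEnd ℂ) (Cs ℓ) * ((starRingEnd ℂ) (bs ℓ)) ^ n *
        (z - (starRingEnd ℂ) (bs ℓ))⁻¹‖ / b ^ n ≤ Cε * ((n:ℝ) * (q / b) ^ n) := by
    rw [show Cε * ((n:ℝ) * (q / b) ^ n) = Cε * (n:ℝ) * q ^ n / b ^ n by
      rw [div_pow]; ring]
    exact (div_le_div_iff_of_pos_right (by positivity)).mpr hb'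
  exact lt_of_le_of_lt hstep h1
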